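/- Pizza Theorem (two-person form): Let D be a closed disk, P any interior point of D, and n a positive multiple of 4. Draw n lines through P at equal angles π/n, dividing D into 2n slices numbered consecutively clockwise 1, 2, …, 2n. Then the total area of the odd-numbered slices equals the total area of the even-numbered slices; each equals half the area of D. -/

import Mathlib

open Real MeasureTheory

/-- The closed angular sector at `P` of directions with angles in `[a, b]`. -/
def angularSector (P : ℂ) (a b : ℝ) : Set ℂ :=
  {z : ℂ | ∃ t : ℝ, 0 ≤ t ∧ ∃ φ : ℝ, a ≤ φ ∧ φ ≤ b ∧
    z = P + (t : ℂ) * Complex.exp ((φ : ℝ) * Complex.I)}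

noncomputable def srho (w : ℂ) (R : ℝ) (φ : ℝ) : ℝ :=
  Real.sqrt (R ^ 2 - (w * Complex.exp (-(φ : ℂ) * Complex.I)).im ^ 2)
    - (w * Complex.exp (-(φ : ℂ) * Complex.I)).re

lemma srho_u_abs (w : ℂ) (φ : ℝ) :
    ‖(w * Complex.exp (-(φ : ℂ) * Complex.I))‖ = ‖w‖ := by
  rw [norm_mul, show -(φ : ℂ) * Complex.I = ((-φ : ℝ) : ℂ) * Complex.I by push_cast; ring,
    Complex.norm_exp_ofReal_mul_I, mul_one]

lemma srho_u_sq {w : ℂ} {R : ℝ} (hw : ‖w‖ ≤ R) (φ : ℝ) :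
    (w * Complex.exp (-(φ : ℂ) * Complex.I)).re ^ 2
      + (w * Complex.exp (-(φ : ℂ) * Complex.I)).im ^ 2 ≤ R ^ 2 := by
  set u := w * Complex.exp (-(φ : ℂ) * Complex.I) with hu
  have h1 : u.re ^ 2 + u.im ^ 2 = ‖u‖ ^ 2 := by
    rw [Complex.sq_norm, Complex.normSq_apply]; ring
  have h2 : ‖u‖ = ‖w‖ := srho_u_abs w φ
  have h0 : (0 : ℝ) ≤ ‖w‖ := norm_nonneg w
  rw [h1, h2]
  nlinarith

lemma srho_re_le {w : ℂ} {R : ℝ} (hw : ‖w‖ ≤ R) (φ : ℝ) :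
    |(w * Complex.exp (-(φ : ℂ) * Complex.I)).re|
      ≤ Real.sqrt (R ^ 2 - (w * Complex.exp (-(φ : ℂ) * Complex.I)).im ^ 2) := by
  have h := srho_u_sq hw φ
  rw [← Real.sqrt_sq_eq_abs]
  exact Real.sqrt_le_sqrt (by linarith)

lemma srho_nonneg {w : ℂ} {R : ℝ} (hw : ‖w‖ ≤ R) (φ : ℝ) :
    0 ≤ srho w R φ := by
  have h := srho_re_le hw φ
  have := le_abs_self (w * Complex.exp (-(φ : ℂ) * Complex.I)).re
  unfold srho; linarith

lemma srho_le {w : ℂ} {R : ℝ} (hw : ‖w‖ ≤ R) (φ : ℝ) :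
    srho w R φ ≤ R + ‖w‖ := by
  have hR0 : 0 ≤ R := le_trans (norm_nonneg w) hw
  have h1 : Real.sqrt (R ^ 2 - (w * Complex.exp (-(φ : ℂ) * Complex.I)).im ^ 2)
      ≤ Real.sqrt (R ^ 2) := Real.sqrt_le_sqrt (by nlinarith [sq_nonneg (w * Complex.exp (-(φ : ℂ) * Complex.I)).im])
  rw [Real.sqrt_sq hR0] at h1
  have h2 : -(w * Complex.exp (-(φ : ℂ) * Complex.I)).re ≤ ‖w‖ := by
    have := Complex.abs_re_le_norm (w * Complex.exp (-(φ : ℂ) * Complex.I))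
    rw [srho_u_abs w φ] at this
    cases abs_cases (w * Complex.exp (-(φ : ℂ) * Complex.I)).re with
    | inl h => linarith [h.1 ▸ this, abs_nonneg (w * Complex.exp (-(φ : ℂ) * Complex.I)).re,
        neg_abs_le (w * Complex.exp (-(φ : ℂ) * Complex.I)).re]
    | inr h => linarith [neg_abs_le (w * Complex.exp (-(φ : ℂ) * Complex.I)).re]
  unfold srho; linarith

lemma mem_closedBall_iff {w : ℂ} {R : ℝ} (hw : ‖w‖ ≤ R)
    {t : ℝ} (ht : 0 ≤ t) (φ : ℝ) :
    ((t : ℂ) * Complex.exp ((φ : ℝ) * Complex.I)) ∈ Metric.closedBall (-w) R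
      ↔ t ≤ srho w R φ := by
  have hR0 : 0 ≤ R := le_trans (norm_nonneg w) hw
  set u := w * Complex.exp (-(φ : ℂ) * Complex.I) with hu
  have key : (t : ℂ) * Complex.exp ((φ : ℝ) * Complex.I) - (-w)
      = Complex.exp ((φ : ℝ) * Complex.I) * ((t : ℂ) + u) := by
    rw [hu]
    have : Complex.exp ((φ : ℝ) * Complex.I) * Complex.exp (-(φ : ℂ) * Complex.I) = 1 := by
      rw [← Complex.exp_add]; ring_nf; exact Complex.exp_zero
    calc (t : ℂ) * Complex.exp ((φ : ℝ) * Complex.I) - (-w)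
        = Complex.exp ((φ : ℝ) * Complex.I) * (t : ℂ)
          + (Complex.exp ((φ : ℝ) * Complex.I) * Complex.exp (-(φ : ℂ) * Complex.I)) * w := by
          rw [this]; ring
      _ = _ := by ring
  rw [Metric.mem_closedBall, Complex.dist_eq, key, norm_mul,
    Complex.norm_exp_ofReal_mul_I, one_mul]
  have hnorm : ‖((t : ℂ) + u)‖ = Real.sqrt ((t + u.re) ^ 2 + u.im ^ 2) := by
    rw [Complex.norm_def, Complex.normSq_apply]
    simp [Complex.add_re, Complex.add_im]
    ring_nf
  rw [hnorm]
  set s := Real.sqrt (R ^ 2 - u.im ^ 2) with hs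
  have him : u.im ^ 2 ≤ R ^ 2 := by nlinarith [srho_u_sq hw φ, sq_nonneg u.re]
  have hs2 : s ^ 2 = R ^ 2 - u.im ^ 2 := Real.sq_sqrt (by linarith)
  have hs0 : 0 ≤ s := Real.sqrt_nonneg _
  have hre : |u.re| ≤ s := srho_re_le hw φ
  constructor
  · intro h
    have h' : (t + u.re) ^ 2 + u.im ^ 2 ≤ R ^ 2 := by
      have := Real.sqrt_le_sqrt (le_of_eq hs2.symm)
      nlinarith [Real.sq_sqrt (by positivity : (0:ℝ) ≤ (t + u.re) ^ 2 + u.im ^ 2), h, hR0,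
        Real.sqrt_nonneg ((t + u.re) ^ 2 + u.im ^ 2)]
    have h1 : (t + u.re) ^ 2 ≤ s ^ 2 := by linarith
    have h2 : t + u.re ≤ s := by
      have := Real.sqrt_le_sqrt h1
      rw [Real.sqrt_sq_eq_abs, Real.sqrt_sq hs0] at this
      linarith [le_abs_self (t + u.re)]
    unfold srho; rw [← hu, ← hs]; linarith
  · intro h
    unfold srho at h; rw [← hu, ← hs] at h
    have h2 : t + u.re ≤ s := by linarith
    have h3 : -s ≤ t + u.re := by
      have h6 := neg_abs_le u.re
      linarith
    have h4 : (t + u.re) ^ 2 ≤ s ^ 2 := sq_le_sq' h3 h2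
    have h5 : (t + u.re) ^ 2 + u.im ^ 2 ≤ R ^ 2 := by linarith
    calc Real.sqrt ((t + u.re) ^ 2 + u.im ^ 2) ≤ Real.sqrt (R ^ 2) := Real.sqrt_le_sqrt h5
      _ = R := Real.sqrt_sq hR0

lemma exp_ofReal_mul_I (φ : ℝ) :
    Complex.exp ((φ : ℝ) * Complex.I) = Complex.cos φ + Complex.sin φ * Complex.I :=
  Complex.exp_mul_I _

lemma arg_exp_ofReal_mul_I {φ : ℝ} (h1 : -π < φ) (h2 : φ ≤ π) :
    Complex.arg (Complex.exp ((φ : ℝ) * Complex.I)) = φ := by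
  rw [exp_ofReal_mul_I]
  exact Complex.arg_cos_add_sin_mul_I ⟨h1, h2⟩

lemma sector_eq {δ : ℝ} (h0 : 0 ≤ δ) (hπ : δ < π) :
    angularSector 0 0 δ = Complex.arg ⁻¹' Set.Icc 0 δ := by
  ext z
  constructor
  · rintro ⟨t, ht, φ, hφ0, hφδ, rfl⟩
    rcases eq_or_lt_of_le ht with h | h
    · simp [← h, Complex.arg_zero, h0]
    · rw [zero_add]
      have : Complex.arg ((t : ℂ) * Complex.exp ((φ : ℝ) * Complex.I)) = φ := by
        rw [Complex.arg_real_mul _ h, arg_exp_ofReal_mul_I (by linarith) (by linarith)]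
      simp only [Set.mem_preimage, this, Set.mem_Icc]
      exact ⟨hφ0, hφδ⟩
  · intro hz
    simp only [Set.mem_preimage, Set.mem_Icc] at hz
    refine ⟨‖z‖, norm_nonneg z, Complex.arg z, hz.1, hz.2, ?_⟩
    rw [zero_add, Complex.norm_mul_exp_arg_mul_I]

lemma srho_continuous (w : ℂ) (R : ℝ) : Continuous (srho w R) := by
  unfold srho
  fun_prop

lemma sector_volume (w : ℂ) {R : ℝ} (hw : ‖w‖ ≤ R) {δ : ℝ}
    (h0 : 0 ≤ δ) (hπ : δ < π) :
    volume (Metric.closedBall (-w) R ∩ angularSector 0 0 δ)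
      = ENNReal.ofReal (∫ φ in (0:ℝ)..δ, srho w R φ ^ 2 / 2) := by
  have hR0 : 0 ≤ R := le_trans (norm_nonneg w) hw
  set S := Metric.closedBall (-w) R ∩ angularSector 0 0 δ with hS
  have hSm : MeasurableSet S :=
    measurableSet_closedBall.inter
      (by rw [sector_eq h0 hπ]; exact Complex.measurable_arg measurableSet_Icc)
  have hfin : volume S ≠ ⊤ :=
    ne_of_lt (lt_of_le_of_lt (measure_mono Set.inter_subset_left) measure_closedBall_lt_top)
  set g : ℝ × ℝ → ℝ :=
    fun p => if 0 < p.1 ∧ p.1 ≤ srho w R p.2 ∧ 0 ≤ p.2 ∧ p.2 ≤ δ then p.1 else 0 with hg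
  have hAm : MeasurableSet {p : ℝ × ℝ | 0 < p.1 ∧ p.1 ≤ srho w R p.2 ∧ 0 ≤ p.2 ∧ p.2 ≤ δ} := by
    simp only [Set.setOf_and]
    exact (measurableSet_lt measurable_const measurable_fst).inter
      ((measurableSet_le measurable_fst
        (((srho_continuous w R).measurable).comp measurable_snd)).inter
      ((measurableSet_le measurable_const measurable_snd).inter
        (measurableSet_le measurable_snd measurable_const)))
  have hgm : Measurable g := Measurable.ite hAm measurable_fst measurable_const
  have hgi : Integrable g := by
    set M := R + ‖w‖ with hM
    have hM0 : 0 ≤ M := add_nonneg hR0 (norm_nonneg w)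
    apply Integrable.mono' (g := (Set.Icc (0:ℝ) M ×ˢ Set.Icc (0:ℝ) δ).indicator fun _ => M)
    · exact (integrable_indicator_iff (measurableSet_Icc.prod measurableSet_Icc)).2
        (integrableOn_const ((isCompact_Icc.prod isCompact_Icc).measure_lt_top).ne)
    · exact hgm.aestronglyMeasurable
    · refine Filter.Eventually.of_forall fun p => ?_
      by_cases h : 0 < p.1 ∧ p.1 ≤ srho w R p.2 ∧ 0 ≤ p.2 ∧ p.2 ≤ δ
      · have hple : p.1 ≤ M := le_trans h.2.1 (srho_le hw p.2)
        have hpmem : p ∈ Set.Icc (0:ℝ) M ×ˢ Set.Icc (0:ℝ) δ :=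
          ⟨⟨le_of_lt h.1, hple⟩, ⟨h.2.2.1, h.2.2.2⟩⟩
        show ‖if 0 < p.1 ∧ p.1 ≤ srho w R p.2 ∧ 0 ≤ p.2 ∧ p.2 ≤ δ then p.1 else 0‖ ≤ _
        rw [if_pos h, Set.indicator_of_mem hpmem, Real.norm_eq_abs, abs_of_pos h.1]
        exact hple
      · show ‖if 0 < p.1 ∧ p.1 ≤ srho w R p.2 ∧ 0 ≤ p.2 ∧ p.2 ≤ δ then p.1 else 0‖ ≤ _
        rw [if_neg h, norm_zero]
        exact Set.indicator_nonneg (fun _ _ => hM0) p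
  have step1 : (∫ p in polarCoord.target,
        p.1 • S.indicator (fun _ => (1:ℝ)) (Complex.polarCoord.symm p))
      = (volume S).toReal := by
    rw [Complex.integral_comp_polarCoord_symm]
    exact integral_indicator_one hSm
  have step2 : (∫ p in polarCoord.target,
        p.1 • S.indicator (fun _ => (1:ℝ)) (Complex.polarCoord.symm p))
      = ∫ p in polarCoord.target, g p := by
    apply setIntegral_congr_fun polarCoord.open_target.measurableSet
    intro p hp
    rw [polarCoord_target, Set.mem_prod, Set.mem_Ioi, Set.mem_Ioo] at hp
    obtain ⟨hp1, hp2⟩ := hp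
    have hsymm : Complex.polarCoord.symm p
        = ((p.1 : ℝ) : ℂ) * Complex.exp ((p.2 : ℝ) * Complex.I) := by
      rw [Complex.polarCoord_symm_apply, exp_ofReal_mul_I, Complex.ofReal_cos,
        Complex.ofReal_sin]
    have hmem : Complex.polarCoord.symm p ∈ S ↔
        (p.1 ≤ srho w R p.2 ∧ 0 ≤ p.2 ∧ p.2 ≤ δ) := by
      rw [hS, Set.mem_inter_iff, hsymm, mem_closedBall_iff hw (le_of_lt hp1) p.2,
        sector_eq h0 hπ, Set.mem_preimage, Set.mem_Icc,
        Complex.arg_real_mul _ hp1, arg_exp_ofReal_mul_I hp2.1 (le_of_lt hp2.2)]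
    show p.1 • S.indicator (fun _ => (1:ℝ)) (Complex.polarCoord.symm p)
      = if 0 < p.1 ∧ p.1 ≤ srho w R p.2 ∧ 0 ≤ p.2 ∧ p.2 ≤ δ then p.1 else 0
    by_cases h : p.1 ≤ srho w R p.2 ∧ 0 ≤ p.2 ∧ p.2 ≤ δ
    · rw [Set.indicator_of_mem (hmem.mpr h), if_pos ⟨hp1, h.1, h.2.1, h.2.2⟩,
        smul_eq_mul, mul_one]
    · rw [Set.indicator_of_notMem (fun hx => h (hmem.mp hx)), if_neg (by tauto), smul_zero]
  have hgz : ∀ p ∉ polarCoord.target, g p = 0 := by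
    intro p hp
    show (if 0 < p.1 ∧ p.1 ≤ srho w R p.2 ∧ 0 ≤ p.2 ∧ p.2 ≤ δ then p.1 else 0) = 0
    rw [if_neg]
    intro hcond
    apply hp
    rw [polarCoord_target, Set.mem_prod, Set.mem_Ioi, Set.mem_Ioo]
    exact ⟨hcond.1, ⟨lt_of_lt_of_le (by linarith [Real.pi_pos]) hcond.2.2.1,
      lt_of_le_of_lt hcond.2.2.2 hπ⟩⟩
  have step3 : (∫ p in polarCoord.target, g p) = ∫ p, g p := by
    rw [← integral_indicator polarCoord.open_target.measurableSet]
    congr 1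
    funext p
    by_cases hp : p ∈ polarCoord.target
    · rw [Set.indicator_of_mem hp]
    · rw [Set.indicator_of_notMem hp, hgz p hp]
  have step4 : (∫ p, g p) = ∫ φ : ℝ, ∫ r : ℝ, g (r, φ) := by
    calc ∫ p, g p = ∫ r : ℝ, ∫ φ : ℝ, g (r, φ) := by
          rw [Measure.volume_eq_prod] at hgi ⊢
          exact integral_prod g hgi
      _ = ∫ φ : ℝ, ∫ r : ℝ, g (r, φ) := by
          rw [Measure.volume_eq_prod] at hgi
          exact integral_integral_swap hgi
  have inner_eq : ∀ φ : ℝ, (∫ r : ℝ, g (r, φ))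
      = Set.indicator (Set.Icc 0 δ) (fun ψ => srho w R ψ ^ 2 / 2) φ := by
    intro φ
    by_cases hφ : 0 ≤ φ ∧ φ ≤ δ
    · have hρ0 : 0 ≤ srho w R φ := srho_nonneg hw φ
      have hfun : (fun r : ℝ => g (r, φ))
          = Set.indicator (Set.Ioc 0 (srho w R φ)) (fun r => r) := by
        funext r
        show (if 0 < r ∧ r ≤ srho w R φ ∧ 0 ≤ φ ∧ φ ≤ δ then r else 0)
          = Set.indicator (Set.Ioc 0 (srho w R φ)) (fun x => x) r
        by_cases hr : 0 < r ∧ r ≤ srho w R φ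
        · rw [if_pos ⟨hr.1, hr.2, hφ.1, hφ.2⟩, Set.indicator_of_mem (Set.mem_Ioc.2 hr)]
        · rw [if_neg (by tauto), Set.indicator_of_notMem (fun hx => hr (Set.mem_Ioc.1 hx))]
      rw [hfun, integral_indicator measurableSet_Ioc,
        ← intervalIntegral.integral_of_le hρ0, Set.indicator_of_mem (Set.mem_Icc.2 hφ)]
      rw [integral_id]
      ring
    · have hzero : (fun r : ℝ => g (r, φ)) = fun _ => 0 := by
        funext r
        show (if 0 < r ∧ r ≤ srho w R φ ∧ 0 ≤ φ ∧ φ ≤ δ then r else 0) = 0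
        rw [if_neg (by tauto)]
      rw [hzero, integral_zero, Set.indicator_of_notMem (fun hx => hφ (Set.mem_Icc.1 hx))]
  have outer : (∫ φ : ℝ, Set.indicator (Set.Icc 0 δ) (fun ψ => srho w R ψ ^ 2 / 2) φ)
      = ∫ φ in (0:ℝ)..δ, srho w R φ ^ 2 / 2 := by
    rw [integral_indicator measurableSet_Icc, intervalIntegral.integral_of_le h0,
      integral_Icc_eq_integral_Ioc]
  have key : (volume S).toReal = ∫ φ in (0:ℝ)..δ, srho w R φ ^ 2 / 2 := by
    rw [← step1, step2, step3, step4,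
      show (fun φ : ℝ => ∫ r : ℝ, g (r, φ))
        = Set.indicator (Set.Icc 0 δ) (fun ψ => srho w R ψ ^ 2 / 2) from funext inner_eq]
    exact outer
  rw [← key, ENNReal.ofReal_toReal hfin]

lemma sector_measurable {δ : ℝ} (h0 : 0 ≤ δ) (hπ : δ < π) :
    MeasurableSet (angularSector 0 0 δ) := by
  rw [sector_eq h0 hπ]; exact Complex.measurable_arg measurableSet_Icc

lemma slice_volume (O P : ℂ) {R : ℝ} (hw : ‖(P - O)‖ ≤ R) (a : ℝ) {δ : ℝ}
    (h0 : 0 ≤ δ) (hπ : δ < π) :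
    volume (Metric.closedBall O R ∩ angularSector P a (a + δ))
      = ENNReal.ofReal (∫ φ in (0:ℝ)..δ,
          srho (Complex.exp (-(a : ℂ) * Complex.I) * (P - O)) R φ ^ 2 / 2) := by
  set c : Circle := Circle.exp (-a) with hc
  set w : ℂ := Complex.exp (-(a : ℂ) * Complex.I) * (P - O) with hW
  have hcoe : (c : ℂ) = Complex.exp (-(a : ℂ) * Complex.I) := by
    rw [hc, Circle.coe_exp]; push_cast; ring_nf
  have habs : ‖w‖ ≤ R := by
    rw [hW, norm_mul, show -(a : ℂ) * Complex.I = ((-a : ℝ) : ℂ) * Complex.I by push_cast; ring,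
      Complex.norm_exp_ofReal_mul_I, one_mul]
    exact hw
  set T := Metric.closedBall (-w) R ∩ angularSector 0 0 δ with hT
  have hTm : MeasurableSet T := measurableSet_closedBall.inter (sector_measurable h0 hπ)
  set g : ℂ → ℂ := fun z => (c : ℂ) * (z - P) with hgdef
  have hmp : MeasurePreserving g volume volume := by
    have h1 : MeasurePreserving (⇑(rotation c) ∘ fun z : ℂ => z - P) volume volume :=
      ((rotation c).measurePreserving).comp (measurePreserving_sub_right volume P)
    have h2 : g = ⇑(rotation c) ∘ fun z : ℂ => z - P := by
      funext z; simp [hgdef, rotation_apply]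
    rwa [h2]
  have hpre : g ⁻¹' T = Metric.closedBall O R ∩ angularSector P a (a + δ) := by
    ext z
    simp only [hT, Set.mem_preimage, Set.mem_inter_iff]
    apply and_congr
    · rw [Metric.mem_closedBall, Metric.mem_closedBall, Complex.dist_eq, Complex.dist_eq]
      have heq : g z - (-w) = (c : ℂ) * (z - O) := by
        rw [hgdef, hW, hcoe]; ring
      rw [heq, norm_mul, hcoe,
        show -(a : ℂ) * Complex.I = ((-a : ℝ) : ℂ) * Complex.I by push_cast; ring,
        Complex.norm_exp_ofReal_mul_I, one_mul]
    · constructor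
      · rintro ⟨t, ht, φ, hφ0, hφδ, heq⟩
        rw [zero_add] at heq
        refine ⟨t, ht, a + φ, by linarith, by linarith, ?_⟩
        have h2 : z - P = Complex.exp ((a : ℂ) * Complex.I)
            * ((t : ℂ) * Complex.exp ((φ : ℝ) * Complex.I)) := by
          rw [← heq, hgdef, hcoe, ← mul_assoc, ← Complex.exp_add,
            show (a : ℂ) * Complex.I + -(a : ℂ) * Complex.I = 0 by ring,
            Complex.exp_zero, one_mul]
        have h3 : Complex.exp (((a + φ : ℝ) : ℂ) * Complex.I)
            = Complex.exp ((a : ℂ) * Complex.I) * Complex.exp ((φ : ℝ) * Complex.I) := by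
          rw [← Complex.exp_add]; push_cast; ring_nf
        rw [h3]
        linear_combination h2
      · rintro ⟨t, ht, φ, hφa, hφb, rfl⟩
        refine ⟨t, ht, φ - a, by linarith, by linarith, ?_⟩
        rw [zero_add, hgdef, hcoe]
        show Complex.exp (-(a : ℂ) * Complex.I)
            * (P + (t : ℂ) * Complex.exp ((φ : ℝ) * Complex.I) - P)
          = (t : ℂ) * Complex.exp (((φ - a : ℝ) : ℂ) * Complex.I)
        have h5 : Complex.exp (((φ - a : ℝ) : ℂ) * Complex.I)
            = Complex.exp (-(a : ℂ) * Complex.I) * Complex.exp ((φ : ℝ) * Complex.I) := by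
          rw [← Complex.exp_add]; push_cast; ring_nf
        rw [h5]; ring
  calc volume (Metric.closedBall O R ∩ angularSector P a (a + δ))
      = volume (g ⁻¹' T) := by rw [hpre]
    _ = volume T := hmp.measure_preimage hTm.nullMeasurableSet
    _ = ENNReal.ofReal (∫ φ in (0:ℝ)..δ, srho w R φ ^ 2 / 2) :=
        sector_volume w habs h0 hπ

lemma quad_real {R x y s s' : ℝ} (hs : s ^ 2 = R ^ 2 - y ^ 2) (hs' : s' ^ 2 = R ^ 2 - x ^ 2) :
    (s - x) ^ 2 + (s' - y) ^ 2 + (s + x) ^ 2 + (s' + y) ^ 2 = 4 * R ^ 2 := by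
  nlinarith [hs, hs']

lemma exp_neg_pi_div_two : Complex.exp (-((π / 2 : ℝ) : ℂ) * Complex.I) = -Complex.I := by
  rw [show -((π / 2 : ℝ) : ℂ) * Complex.I = ((-(π / 2) : ℝ) : ℂ) * Complex.I by push_cast; ring,
    Complex.exp_mul_I, ← Complex.ofReal_cos, ← Complex.ofReal_sin]
  simp [Real.cos_pi_div_two, Real.sin_pi_div_two]

lemma exp_neg_pi : Complex.exp (-((π : ℝ) : ℂ) * Complex.I) = -1 := by
  rw [show -((π : ℝ) : ℂ) * Complex.I = ((-π : ℝ) : ℂ) * Complex.I by push_cast; ring,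
    Complex.exp_mul_I, ← Complex.ofReal_cos, ← Complex.ofReal_sin]
  simp [Real.cos_pi, Real.sin_pi]

lemma exp_neg_three_pi_div_two :
    Complex.exp (-((3 * π / 2 : ℝ) : ℂ) * Complex.I) = Complex.I := by
  have : -((3 * π / 2 : ℝ) : ℂ) * Complex.I
      = -((π : ℝ) : ℂ) * Complex.I + -((π / 2 : ℝ) : ℂ) * Complex.I := by push_cast; ring
  rw [this, Complex.exp_add, exp_neg_pi, exp_neg_pi_div_two]
  ring

lemma srho_sq_expand {w : ℂ} {R : ℝ} (hw : ‖w‖ ≤ R) (φ : ℝ) :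
    srho w R φ ^ 2 = (Real.sqrt (R ^ 2 - (w * Complex.exp (-(φ : ℂ) * Complex.I)).im ^ 2)
      - (w * Complex.exp (-(φ : ℂ) * Complex.I)).re) ^ 2 := rfl

lemma srho_quad {R : ℝ} (v : ℂ) (hv : ‖v‖ ≤ R) (a φ : ℝ) :
    srho (Complex.exp (-((a : ℝ) : ℂ) * Complex.I) * v) R φ ^ 2
      + srho (Complex.exp (-((a + π / 2 : ℝ) : ℂ) * Complex.I) * v) R φ ^ 2
      + srho (Complex.exp (-((a + π : ℝ) : ℂ) * Complex.I) * v) R φ ^ 2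
      + srho (Complex.exp (-((a + 3 * π / 2 : ℝ) : ℂ) * Complex.I) * v) R φ ^ 2
      = 4 * R ^ 2 := by
  set u : ℂ := v * Complex.exp (-((a + φ : ℝ) : ℂ) * Complex.I) with hu
  have habs : ‖u‖ = ‖v‖ := by
    rw [hu, norm_mul, show -((a + φ : ℝ) : ℂ) * Complex.I
        = ((-(a + φ) : ℝ) : ℂ) * Complex.I by push_cast; ring,
      Complex.norm_exp_ofReal_mul_I, mul_one]
  have hsq : u.re ^ 2 + u.im ^ 2 ≤ R ^ 2 := by
    have h1 : u.re ^ 2 + u.im ^ 2 = ‖u‖ ^ 2 := by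
      rw [Complex.sq_norm, Complex.normSq_apply]; ring
    have h0 : (0 : ℝ) ≤ ‖v‖ := norm_nonneg v
    rw [h1, habs]; nlinarith
  have comb : ∀ b p : ℝ,
      Complex.exp (-((b + p : ℝ) : ℂ) * Complex.I) * v * Complex.exp (-(φ : ℂ) * Complex.I)
      = v * Complex.exp (-((b + φ : ℝ) : ℂ) * Complex.I)
        * Complex.exp (-((p : ℝ) : ℂ) * Complex.I) := by
    intro b p
    rw [mul_comm _ v, mul_assoc, mul_assoc, ← Complex.exp_add, ← Complex.exp_add]
    congr 1
    push_cast; ring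
  have e0 : Complex.exp (-((a : ℝ) : ℂ) * Complex.I) * v * Complex.exp (-(φ : ℂ) * Complex.I)
      = u := by
    rw [mul_comm _ v, mul_assoc, ← Complex.exp_add, hu]
    congr 1
    push_cast; ring
  simp only [srho]
  rw [e0, comb a (π / 2), comb a π, comb a (3 * π / 2),
    exp_neg_pi_div_two, exp_neg_pi, exp_neg_three_pi_div_two, ← hu]
  have hre1 : (u * -Complex.I).re = u.im := by simp
  have him1 : (u * -Complex.I).im = -u.re := by simp
  have hre2 : (u * -1).re = -u.re := by simp
  have him2 : (u * -1).im = -u.im := by simp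
  have hre3 : (u * Complex.I).re = -u.im := by simp
  have him3 : (u * Complex.I).im = u.re := by simp
  rw [hre1, him1, hre2, him2, hre3, him3, neg_sq, neg_sq]
  have hs : Real.sqrt (R ^ 2 - u.im ^ 2) ^ 2 = R ^ 2 - u.im ^ 2 :=
    Real.sq_sqrt (by nlinarith [sq_nonneg u.re])
  have hs' : Real.sqrt (R ^ 2 - u.re ^ 2) ^ 2 = R ^ 2 - u.re ^ 2 :=
    Real.sq_sqrt (by nlinarith [sq_nonneg u.im])
  nlinarith [hs, hs']

lemma quad_vol (O P : ℂ) {R : ℝ} (hw : ‖(P - O)‖ ≤ R) (a : ℝ) {δ : ℝ}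
    (h0 : 0 ≤ δ) (hπ : δ < π) :
    volume (Metric.closedBall O R ∩ angularSector P a (a + δ))
      + volume (Metric.closedBall O R ∩ angularSector P (a + π / 2) (a + π / 2 + δ))
      + volume (Metric.closedBall O R ∩ angularSector P (a + π) (a + π + δ))
      + volume (Metric.closedBall O R ∩ angularSector P (a + 3 * π / 2) (a + 3 * π / 2 + δ))
      = ENNReal.ofReal (2 * R ^ 2 * δ) := by
  have hint : ∀ b : ℝ, IntervalIntegrable
      (fun φ => srho (Complex.exp (-(b : ℂ) * Complex.I) * (P - O)) R φ ^ 2 / 2)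
      volume 0 δ :=
    fun b => (((srho_continuous _ R).pow 2).div_const 2).intervalIntegrable _ _
  have hnn : ∀ b : ℝ,
      0 ≤ ∫ φ in (0:ℝ)..δ, srho (Complex.exp (-(b : ℂ) * Complex.I) * (P - O)) R φ ^ 2 / 2 :=
    fun b => intervalIntegral.integral_nonneg h0 (fun x _ => by positivity)
  rw [slice_volume O P hw a h0 hπ, slice_volume O P hw (a + π / 2) h0 hπ,
      slice_volume O P hw (a + π) h0 hπ, slice_volume O P hw (a + 3 * π / 2) h0 hπ,
      ← ENNReal.ofReal_add (hnn a) (hnn (a + π / 2)),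
      ← intervalIntegral.integral_add (hint a) (hint (a + π / 2)),
      ← ENNReal.ofReal_add (intervalIntegral.integral_nonneg h0 (fun x _ => by positivity))
        (hnn (a + π)),
      ← intervalIntegral.integral_add ((hint a).add (hint (a + π / 2))) (hint (a + π)),
      ← ENNReal.ofReal_add (intervalIntegral.integral_nonneg h0 (fun x _ => by positivity))
        (hnn (a + 3 * π / 2)),
      ← intervalIntegral.integral_add (((hint a).add (hint (a + π / 2))).add (hint (a + π)))
        (hint (a + 3 * π / 2))]
  congr 1
  have hcong : ∀ φ ∈ Set.uIcc (0:ℝ) δ,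
      srho (Complex.exp (-(a : ℂ) * Complex.I) * (P - O)) R φ ^ 2 / 2
        + srho (Complex.exp (-((a + π / 2 : ℝ) : ℂ) * Complex.I) * (P - O)) R φ ^ 2 / 2
        + srho (Complex.exp (-((a + π : ℝ) : ℂ) * Complex.I) * (P - O)) R φ ^ 2 / 2
        + srho (Complex.exp (-((a + 3 * π / 2 : ℝ) : ℂ) * Complex.I) * (P - O)) R φ ^ 2 / 2
      = 2 * R ^ 2 := by
    intro φ _
    have h := srho_quad (P - O) hw a φ
    linarith
  rw [intervalIntegral.integral_congr hcong, intervalIntegral.integral_const, smul_eq_mul]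
  ring

lemma pizza_half (O P : ℂ) {R : ℝ} (hw : ‖(P - O)‖ ≤ R)
    (n : ℕ) (hn : 0 < n) (hmul : 4 ∣ n) (ψ : ℝ) :
    (∑ i ∈ Finset.range n, volume (Metric.closedBall O R ∩
        angularSector P (ψ + (2 * (i : ℝ)) * π / n) (ψ + (2 * (i : ℝ) + 1) * π / n))) =
      ENNReal.ofReal (π * R ^ 2 / 2) := by
  obtain ⟨m, rfl⟩ := hmul
  have hm : 0 < m := by omega
  have hm' : ((m : ℕ) : ℝ) ≠ 0 := Nat.cast_ne_zero.mpr hm.ne'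
  have hm1 : (1 : ℝ) ≤ (m : ℝ) := Nat.one_le_cast.mpr hm
  rw [show 4 * m = m + (m + (m + m)) by ring]
  rw [Finset.sum_range_add, Finset.sum_range_add, Finset.sum_range_add,
    ← Finset.sum_add_distrib, ← Finset.sum_add_distrib, ← Finset.sum_add_distrib]
  have step : ∀ k ∈ Finset.range m,
      volume (Metric.closedBall O R ∩ angularSector P
          (ψ + (2 * (k : ℝ)) * π / ((m + (m + (m + m)) : ℕ) : ℝ))
          (ψ + (2 * (k : ℝ) + 1) * π / ((m + (m + (m + m)) : ℕ) : ℝ)))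
      + (volume (Metric.closedBall O R ∩ angularSector P
          (ψ + (2 * ((m + k : ℕ) : ℝ)) * π / ((m + (m + (m + m)) : ℕ) : ℝ))
          (ψ + (2 * ((m + k : ℕ) : ℝ) + 1) * π / ((m + (m + (m + m)) : ℕ) : ℝ)))
      + (volume (Metric.closedBall O R ∩ angularSector P
          (ψ + (2 * ((m + (m + k) : ℕ) : ℝ)) * π / ((m + (m + (m + m)) : ℕ) : ℝ))
          (ψ + (2 * ((m + (m + k) : ℕ) : ℝ) + 1) * π / ((m + (m + (m + m)) : ℕ) : ℝ)))
      + volume (Metric.closedBall O R ∩ angularSector P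
          (ψ + (2 * ((m + (m + (m + k)) : ℕ) : ℝ)) * π / ((m + (m + (m + m)) : ℕ) : ℝ))
          (ψ + (2 * ((m + (m + (m + k)) : ℕ) : ℝ) + 1) * π / ((m + (m + (m + m)) : ℕ) : ℝ)))))
      = ENNReal.ofReal (2 * R ^ 2 * (π / (4 * (m : ℝ)))) := by
    intro k _
    set a : ℝ := ψ + 2 * (k : ℝ) * π / (4 * (m : ℝ)) with ha
    have h0δ : 0 ≤ π / (4 * (m : ℝ)) := by positivity
    have hπδ : π / (4 * (m : ℝ)) < π := div_lt_self Real.pi_pos (by linarith)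
    have hq := quad_vol O P hw a h0δ hπδ
    have e1 : ψ + (2 * (k : ℝ)) * π / ((m + (m + (m + m)) : ℕ) : ℝ) = a := by
      rw [ha]; push_cast; field_simp; ring
    have e2 : ψ + (2 * (k : ℝ) + 1) * π / ((m + (m + (m + m)) : ℕ) : ℝ)
        = a + π / (4 * (m : ℝ)) := by
      rw [ha]; push_cast; field_simp; ring
    have e3 : ψ + (2 * ((m + k : ℕ) : ℝ)) * π / ((m + (m + (m + m)) : ℕ) : ℝ)
        = a + π / 2 := by
      rw [ha]; push_cast; field_simp; ring
    have e4 : ψ + (2 * ((m + k : ℕ) : ℝ) + 1) * π / ((m + (m + (m + m)) : ℕ) : ℝ)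
        = a + π / 2 + π / (4 * (m : ℝ)) := by
      rw [ha]; push_cast; field_simp; ring
    have e5 : ψ + (2 * ((m + (m + k) : ℕ) : ℝ)) * π / ((m + (m + (m + m)) : ℕ) : ℝ)
        = a + π := by
      rw [ha]; push_cast; field_simp; ring
    have e6 : ψ + (2 * ((m + (m + k) : ℕ) : ℝ) + 1) * π / ((m + (m + (m + m)) : ℕ) : ℝ)
        = a + π + π / (4 * (m : ℝ)) := by
      rw [ha]; push_cast; field_simp; ring
    have e7 : ψ + (2 * ((m + (m + (m + k)) : ℕ) : ℝ)) * π / ((m + (m + (m + m)) : ℕ) : ℝ)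
        = a + 3 * π / 2 := by
      rw [ha]; push_cast; field_simp; ring
    have e8 : ψ + (2 * ((m + (m + (m + k)) : ℕ) : ℝ) + 1) * π / ((m + (m + (m + m)) : ℕ) : ℝ)
        = a + 3 * π / 2 + π / (4 * (m : ℝ)) := by
      rw [ha]; push_cast; field_simp; ring
    rw [e1, e2, e3, e4, e5, e6, e7, e8, ← add_assoc, ← add_assoc]
    exact hq
  rw [Finset.sum_congr rfl step, Finset.sum_const, Finset.card_range, nsmul_eq_mul,
    ← ENNReal.ofReal_natCast m, ← ENNReal.ofReal_mul (Nat.cast_nonneg m)]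
  congr 1
  field_simp
  ring

/-- Pizza Theorem, two-person form: `D` the closed disk of radius `R` about
`O`, `P ∈ D`, `n` a positive multiple of `4`.  The `n` lines through `P` at angles
`θ + jπ/n` cut `D` into `2n` slices, the `j`-th slice (for `1 ≤ j ≤ 2n`) being `D`
intersected with the sector at `P` of angles `[θ + (j−1)π/n, θ + jπ/n]`.  Then the total
area of the odd-numbered slices and the total area of the even-numbered slices each equal
half the area of `D`. -/
theorem pizza_stmt4
    (O P : ℂ) (R : ℝ) (hR : 0 < R) (hP : P ∈ Metric.closedBall O R)
    (n : ℕ) (hn : 0 < n) (hmul : 4 ∣ n) (θ : ℝ) :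
    (∑ i ∈ Finset.range n, volume (Metric.closedBall O R ∩
        angularSector P (θ + (2 * (i : ℝ)) * π / n) (θ + (2 * (i : ℝ) + 1) * π / n))) =
      ENNReal.ofReal (π * R ^ 2 / 2) ∧
    (∑ i ∈ Finset.range n, volume (Metric.closedBall O R ∩
        angularSector P (θ + (2 * (i : ℝ) + 1) * π / n) (θ + (2 * (i : ℝ) + 2) * π / n))) =
      ENNReal.ofReal (π * R ^ 2 / 2) := by
  have hw : ‖(P - O)‖ ≤ R := by
    have := Metric.mem_closedBall.mp hP
    rwa [Complex.dist_eq] at this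
  constructor
  · exact pizza_half O P hw n hn hmul θ
  · refine Eq.trans (Finset.sum_congr rfl fun i _ => ?_) (pizza_half O P hw n hn hmul (θ + π / n))
    rw [show θ + (2 * (i : ℝ) + 1) * π / (n : ℝ) = θ + π / (n : ℝ) + (2 * (i : ℝ)) * π / (n : ℝ)
        by ring,
      show θ + (2 * (i : ℝ) + 2) * π / (n : ℝ) = θ + π / (n : ℝ) + (2 * (i : ℝ) + 1) * π / (n : ℝ)
        by ring]
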